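/- Fix L > 0 and a continuous function W : [0,L] → ℝ with sup norm ‖W‖, and define s(λ) = sin(√λ L)/√λ + ∑_{k=1}^∞ S_k(λ) for λ > 0. Then s is three times differentiable on (1,∞), and there exists a constant C (depending only on L and ‖W‖) such that for all λ ≥ 1: |s''(λ) + L² sin(√λ L)/(4λ^{3/2})| ≤ C λ^{−2} and |s'''(λ) + L³ cos(√λ L)/(8λ²)| ≤ C λ^{−5/2}. -/

import Mathlib

open MeasureTheory Real Set
open scoped ENNReal

/-- The simplex `Δ_k = {0 ≤ t₁ ≤ ⋯ ≤ t_k ≤ L}` in `ℝ^k`. -/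
def simplexSet (L : ℝ) (k : ℕ) : Set (Fin k → ℝ) :=
  {t | Monotone t ∧ ∀ i, t i ∈ Set.Icc (0:ℝ) L}

/-- The extended sequence `(0, t₁, …, t_k, L)` of length `k+2`. -/
def extSeq (L : ℝ) {k : ℕ} (t : Fin k → ℝ) : Fin (k+2) → ℝ :=
  Fin.snoc (Fin.cons 0 t) L

/-- `S_k(λ) = ∫_{Δ_k} λ^{−(k+1)/2} ∏_{j=0}^{k} sin(√λ(t_{j+1}−t_j)) ∏_{j=1}^{k} W(t_j) dt`. -/
noncomputable def Sfun (L : ℝ) (W : ℝ → ℝ) (k : ℕ) (lam : ℝ) : ℝ :=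
  ∫ t in simplexSet L k,
    lam ^ (-((k:ℝ)+1)/2) *
      (∏ j : Fin (k+1),
        Real.sin (Real.sqrt lam * (extSeq L t j.succ - extSeq L t j.castSucc))) *
      ∏ j : Fin k, W (t j)

/-- `s(λ) = sin(√λ L)/√λ + ∑_{k=1}^∞ S_k(λ)`. -/
noncomputable def sfun (L : ℝ) (W : ℝ → ℝ) (lam : ℝ) : ℝ :=
  Real.sin (Real.sqrt lam * L) / Real.sqrt lam + ∑' k : ℕ, Sfun L W (k+1) lam


noncomputable def gd : ℕ → ℝ → ℝ → ℝ
  | 0, u, l => Real.sin (Real.sqrt l * u) * l ^ (-(1:ℝ)/2)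
  | 1, u, l => u/2 * (Real.cos (Real.sqrt l * u) * l ^ (-(1:ℝ)))
      - 1/2 * (Real.sin (Real.sqrt l * u) * l ^ (-(3:ℝ)/2))
  | 2, u, l => -(u^2/4) * (Real.sin (Real.sqrt l * u) * l ^ (-(3:ℝ)/2))
      - 3*u/4 * (Real.cos (Real.sqrt l * u) * l ^ (-(2:ℝ)))
      + 3/4 * (Real.sin (Real.sqrt l * u) * l ^ (-(5:ℝ)/2))
  | 3, u, l => -(u^3/8) * (Real.cos (Real.sqrt l * u) * l ^ (-(2:ℝ)))
      + 3*u^2/4 * (Real.sin (Real.sqrt l * u) * l ^ (-(5:ℝ)/2))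
      + 15*u/8 * (Real.cos (Real.sqrt l * u) * l ^ (-(3:ℝ)))
      - 15/8 * (Real.sin (Real.sqrt l * u) * l ^ (-(7:ℝ)/2))
  | _+4, _, _ => 0

lemma hasDerivAt_sin_sqrt (u : ℝ) {l : ℝ} (hl : 0 < l) :
    HasDerivAt (fun x => Real.sin (Real.sqrt x * u))
      (Real.cos (Real.sqrt l * u) * (1 / (2 * Real.sqrt l) * u)) l := by
  have h1 : HasDerivAt (fun x : ℝ => Real.sqrt x * u) (1 / (2 * Real.sqrt l) * u) l :=
    (Real.hasDerivAt_sqrt hl.ne').mul_const u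
  exact (Real.hasDerivAt_sin (Real.sqrt l * u)).comp l h1

lemma hasDerivAt_cos_sqrt (u : ℝ) {l : ℝ} (hl : 0 < l) :
    HasDerivAt (fun x => Real.cos (Real.sqrt x * u))
      (-Real.sin (Real.sqrt l * u) * (1 / (2 * Real.sqrt l) * u)) l := by
  have h1 : HasDerivAt (fun x : ℝ => Real.sqrt x * u) (1 / (2 * Real.sqrt l) * u) l :=
    (Real.hasDerivAt_sqrt hl.ne').mul_const u
  exact (Real.hasDerivAt_cos (Real.sqrt l * u)).comp l h1

lemma hasDerivAt_rpow' (p : ℝ) {l : ℝ} (hl : 0 < l) :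
    HasDerivAt (fun x : ℝ => x ^ p) (p * l ^ (p - 1)) l :=
  Real.hasDerivAt_rpow_const (Or.inl hl.ne')

lemma sqrt_rpow_aux {l : ℝ} (hl : 0 < l) (p : ℝ) :
    l ^ (p - 1/2) * Real.sqrt l = l ^ p := by
  rw [Real.sqrt_eq_rpow, ← Real.rpow_add hl]
  norm_num

lemma hasDerivAt_Tsin (u p : ℝ) {l : ℝ} (hl : 0 < l) :
    HasDerivAt (fun x => Real.sin (Real.sqrt x * u) * x ^ p)
      (u/2 * (Real.cos (Real.sqrt l * u) * l ^ (p - 1/2))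
        + p * (Real.sin (Real.sqrt l * u) * l ^ (p - 1))) l := by
  have h := (hasDerivAt_sin_sqrt u hl).mul (hasDerivAt_rpow' p hl)
  refine h.congr_deriv ?_
  have hs : Real.sqrt l ≠ 0 := (Real.sqrt_pos.mpr hl).ne'
  have h2 : Real.cos (Real.sqrt l * u) * (1 / (2 * Real.sqrt l) * u) * l ^ p
      = u/2 * (Real.cos (Real.sqrt l * u) * l ^ (p - 1/2)) := by
    rw [← sqrt_rpow_aux hl p]
    field_simp
  rw [h2]; ring

lemma hasDerivAt_Tcos (u p : ℝ) {l : ℝ} (hl : 0 < l) :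
    HasDerivAt (fun x => Real.cos (Real.sqrt x * u) * x ^ p)
      (-(u/2) * (Real.sin (Real.sqrt l * u) * l ^ (p - 1/2))
        + p * (Real.cos (Real.sqrt l * u) * l ^ (p - 1))) l := by
  have h := (hasDerivAt_cos_sqrt u hl).mul (hasDerivAt_rpow' p hl)
  refine h.congr_deriv ?_
  have hs : Real.sqrt l ≠ 0 := (Real.sqrt_pos.mpr hl).ne'
  have h2 : -Real.sin (Real.sqrt l * u) * (1 / (2 * Real.sqrt l) * u) * l ^ p
      = -(u/2) * (Real.sin (Real.sqrt l * u) * l ^ (p - 1/2)) := by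
    rw [← sqrt_rpow_aux hl p]
    field_simp
  rw [h2]; ring

lemma hasDerivAt_gd0 (u : ℝ) {l : ℝ} (hl : 0 < l) : HasDerivAt (gd 0 u) (gd 1 u l) l := by
  have h := hasDerivAt_Tsin u (-(1:ℝ)/2) hl
  have e1 : (-(1:ℝ)/2 - 1/2) = -(1:ℝ) := by norm_num
  have e2 : (-(1:ℝ)/2 - 1) = -(3:ℝ)/2 := by norm_num
  rw [e1, e2] at h
  show HasDerivAt (fun l => Real.sin (Real.sqrt l * u) * l ^ (-(1:ℝ)/2)) (gd 1 u l) l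
  convert h using 1
  simp only [gd]; ring

lemma hasDerivAt_gd1 (u : ℝ) {l : ℝ} (hl : 0 < l) : HasDerivAt (gd 1 u) (gd 2 u l) l := by
  have h1 := (hasDerivAt_Tcos u (-(1:ℝ)) hl).const_mul (u/2)
  have h2 := (hasDerivAt_Tsin u (-(3:ℝ)/2) hl).const_mul (1/2 : ℝ)
  have e1 : (-(1:ℝ) - 1/2) = -(3:ℝ)/2 := by norm_num
  have e2 : (-(1:ℝ) - 1) = -(2:ℝ) := by norm_num
  have e3 : (-(3:ℝ)/2 - 1/2) = -(2:ℝ) := by norm_num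
  have e4 : (-(3:ℝ)/2 - 1) = -(5:ℝ)/2 := by norm_num
  rw [e1, e2] at h1
  rw [e3, e4] at h2
  have h := h1.sub h2
  show HasDerivAt (fun l => u/2 * (Real.cos (Real.sqrt l * u) * l ^ (-(1:ℝ)))
      - 1/2 * (Real.sin (Real.sqrt l * u) * l ^ (-(3:ℝ)/2))) (gd 2 u l) l
  refine h.congr_deriv ?_
  simp only [gd]; ring

lemma hasDerivAt_gd2 (u : ℝ) {l : ℝ} (hl : 0 < l) : HasDerivAt (gd 2 u) (gd 3 u l) l := by
  have h1 := (hasDerivAt_Tsin u (-(3:ℝ)/2) hl).const_mul (-(u^2/4))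
  have h2 := (hasDerivAt_Tcos u (-(2:ℝ)) hl).const_mul (3*u/4)
  have h3 := (hasDerivAt_Tsin u (-(5:ℝ)/2) hl).const_mul (3/4 : ℝ)
  have e1 : (-(3:ℝ)/2 - 1/2) = -(2:ℝ) := by norm_num
  have e2 : (-(3:ℝ)/2 - 1) = -(5:ℝ)/2 := by norm_num
  have e3 : (-(2:ℝ) - 1/2) = -(5:ℝ)/2 := by norm_num
  have e4 : (-(2:ℝ) - 1) = -(3:ℝ) := by norm_num
  have e5 : (-(5:ℝ)/2 - 1/2) = -(3:ℝ) := by norm_num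
  have e6 : (-(5:ℝ)/2 - 1) = -(7:ℝ)/2 := by norm_num
  rw [e1, e2] at h1
  rw [e3, e4] at h2
  rw [e5, e6] at h3
  have h := (h1.sub h2).add h3
  show HasDerivAt (fun l => -(u^2/4) * (Real.sin (Real.sqrt l * u) * l ^ (-(3:ℝ)/2))
      - 3*u/4 * (Real.cos (Real.sqrt l * u) * l ^ (-(2:ℝ)))
      + 3/4 * (Real.sin (Real.sqrt l * u) * l ^ (-(5:ℝ)/2))) (gd 3 u l) l
  refine h.congr_deriv ?_
  simp only [gd]; ring

lemma rpow_le_four_mul {l : ℝ} (hl : 1/2 ≤ l) {p q : ℝ} (hpq : p ≤ q) (hgap : q - p ≤ 2) :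
    l ^ p ≤ 4 * l ^ q := by
  have hl0 : (0:ℝ) < l := lt_of_lt_of_le (by norm_num) hl
  have h1 : l ^ p = l ^ q * l ^ (p - q) := by
    rw [← Real.rpow_add hl0]; ring_nf
  have h2 : l ^ (p - q) ≤ (1/2 : ℝ) ^ (p - q) :=
    Real.rpow_le_rpow_of_nonpos (by norm_num) hl (by linarith)
  have h3 : (1/2 : ℝ) ^ (p - q) = 2 ^ (q - p) := by
    rw [show (1/2 : ℝ) = 2⁻¹ by norm_num, Real.inv_rpow (by norm_num), ← Real.rpow_neg (by norm_num)]
    ring_nf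
  have h4 : (2:ℝ) ^ (q - p) ≤ 2 ^ (2:ℝ) :=
    Real.rpow_le_rpow_of_exponent_le one_le_two hgap
  have h5 : (2:ℝ) ^ (2:ℝ) = 4 := by
    rw [show (2:ℝ) = ((2:ℕ):ℝ) by norm_num, Real.rpow_natCast]; norm_num
  have hq : 0 ≤ l ^ q := Real.rpow_nonneg hl0.le q
  calc l ^ p = l ^ q * l ^ (p - q) := h1
    _ ≤ l ^ q * (2 ^ (q - p)) := by
        apply mul_le_mul_of_nonneg_left _ hq
        rw [← h3]; exact h2
    _ ≤ l ^ q * 4 := by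
        apply mul_le_mul_of_nonneg_left _ hq
        rw [← h5]; exact h4
    _ = 4 * l ^ q := by ring

lemma tb1 {b : ℝ} (hb : |b| ≤ 1) {l : ℝ} (hl : 0 < l) (p : ℝ) : |b * l ^ p| ≤ l ^ p := by
  rw [abs_mul, abs_of_nonneg (Real.rpow_nonneg hl.le p)]
  nlinarith [Real.rpow_nonneg hl.le p, abs_nonneg b]

lemma tb {b : ℝ} (c : ℝ) (hb : |b| ≤ 1) {l : ℝ} (hl : 0 < l) (p : ℝ) :
    |c * (b * l ^ p)| ≤ |c| * l ^ p := by
  rw [abs_mul]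
  exact mul_le_mul_of_nonneg_left (tb1 hb hl p) (abs_nonneg c)

lemma cube_coef {Lb : ℝ} (hLb : 0 ≤ Lb) :
    Lb^3/2 + 3*Lb^2 + 15*Lb/2 + 15/2 ≤ 8 * (1+Lb)^3 := by nlinarith [pow_nonneg hLb 3, sq_nonneg Lb]

lemma gd_bound {Lb : ℝ} (hLb : 0 ≤ Lb) {u : ℝ} (hu : |u| ≤ Lb) (m : ℕ) {l : ℝ} (hl : 1/2 ≤ l) :
    |gd m u l| ≤ 8 * (1+Lb)^3 * l ^ (-((m:ℝ)+1)/2) := by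
  have hl0 : (0:ℝ) < l := lt_of_lt_of_le (by norm_num) hl
  have habs : ∀ x : ℝ, |Real.sin x| ≤ 1 := fun x => Real.abs_sin_le_one x
  have habc : ∀ x : ℝ, |Real.cos x| ≤ 1 := fun x => Real.abs_cos_le_one x
  have hu0 : 0 ≤ |u| := abs_nonneg u
  have hu2 : |u|^2 ≤ Lb^2 := by nlinarith
  have hu3 : |u|^3 ≤ Lb^3 := by nlinarith
  match m with
  | 0 =>
    have he : -(((0:ℕ):ℝ)+1)/2 = -(1:ℝ)/2 := by norm_num
    rw [he]
    have h0 : |gd 0 u l| ≤ l ^ (-(1:ℝ)/2) := by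
      simp only [gd]; exact tb1 (habs _) hl0 _
    have hX := Real.rpow_nonneg hl0.le (-(1:ℝ)/2)
    nlinarith [pow_nonneg hLb 3, sq_nonneg Lb]
  | 1 =>
    have he : -(((1:ℕ):ℝ)+1)/2 = -(1:ℝ) := by norm_num
    rw [he]
    have t1 := tb (u/2) (habc (Real.sqrt l * u)) hl0 (-(1:ℝ))
    have t2 := tb ((1:ℝ)/2) (habs (Real.sqrt l * u)) hl0 (-(3:ℝ)/2)
    have s1 : |gd 1 u l| ≤ |u/2| * l ^ (-(1:ℝ)) + |(1:ℝ)/2| * l ^ (-(3:ℝ)/2) := by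
      simp only [gd]; exact (abs_sub _ _).trans (add_le_add t1 t2)
    have hb2 : l ^ (-(3:ℝ)/2) ≤ 4 * l ^ (-(1:ℝ)) := rpow_le_four_mul hl (by norm_num) (by norm_num)
    have hau : |u/2| = |u|/2 := by rw [abs_div]; norm_num
    have hX := Real.rpow_nonneg hl0.le (-(1:ℝ))
    have hY := Real.rpow_nonneg hl0.le (-(3:ℝ)/2)
    rw [hau] at s1
    have : |(1:ℝ)/2| = 1/2 := by norm_num
    rw [this] at s1
    nlinarith [pow_nonneg hLb 3, sq_nonneg Lb,
      mul_le_mul_of_nonneg_right hu hX]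
  | 2 =>
    have he : -(((2:ℕ):ℝ)+1)/2 = -(3:ℝ)/2 := by norm_num
    rw [he]
    have t1 := tb (-(u^2/4)) (habs (Real.sqrt l * u)) hl0 (-(3:ℝ)/2)
    have t2 := tb (3*u/4) (habc (Real.sqrt l * u)) hl0 (-(2:ℝ))
    have t3 := tb ((3:ℝ)/4) (habs (Real.sqrt l * u)) hl0 (-(5:ℝ)/2)
    have s1 : |gd 2 u l| ≤ |(-(u^2/4))| * l ^ (-(3:ℝ)/2) + |3*u/4| * l ^ (-(2:ℝ))
        + |(3:ℝ)/4| * l ^ (-(5:ℝ)/2) := by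
      simp only [gd]
      refine (abs_add_le _ _).trans (add_le_add ((abs_sub _ _).trans (add_le_add t1 t2)) t3)
    have hb2 : l ^ (-(2:ℝ)) ≤ 4 * l ^ (-(3:ℝ)/2) := rpow_le_four_mul hl (by norm_num) (by norm_num)
    have hb3 : l ^ (-(5:ℝ)/2) ≤ 4 * l ^ (-(3:ℝ)/2) := rpow_le_four_mul hl (by norm_num) (by norm_num)
    have e1 : |(-(u^2/4))| = |u|^2/4 := by rw [abs_neg, abs_div, abs_pow]; norm_num
    have e2 : |3*u/4| = 3*|u|/4 := by rw [abs_div, abs_mul]; norm_num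
    have e3 : |(3:ℝ)/4| = 3/4 := by norm_num
    rw [e1, e2, e3] at s1
    have hX := Real.rpow_nonneg hl0.le (-(3:ℝ)/2)
    have hY := Real.rpow_nonneg hl0.le (-(2:ℝ))
    have hZ := Real.rpow_nonneg hl0.le (-(5:ℝ)/2)
    nlinarith [pow_nonneg hLb 3, sq_nonneg Lb,
      mul_le_mul_of_nonneg_right hu2 hX, mul_le_mul_of_nonneg_right hu hX]
  | 3 =>
    have he : -(((3:ℕ):ℝ)+1)/2 = -(2:ℝ) := by norm_num
    rw [he]
    have t1 := tb (-(u^3/8)) (habc (Real.sqrt l * u)) hl0 (-(2:ℝ))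
    have t2 := tb (3*u^2/4) (habs (Real.sqrt l * u)) hl0 (-(5:ℝ)/2)
    have t3 := tb (15*u/8) (habc (Real.sqrt l * u)) hl0 (-(3:ℝ))
    have t4 := tb ((15:ℝ)/8) (habs (Real.sqrt l * u)) hl0 (-(7:ℝ)/2)
    have s1 : |gd 3 u l| ≤ |(-(u^3/8))| * l ^ (-(2:ℝ)) + |3*u^2/4| * l ^ (-(5:ℝ)/2)
        + |15*u/8| * l ^ (-(3:ℝ)) + |(15:ℝ)/8| * l ^ (-(7:ℝ)/2) := by
      simp only [gd]
      refine (abs_sub _ _).trans (add_le_add ((abs_add_le _ _).trans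
        (add_le_add ((abs_add_le _ _).trans (add_le_add t1 t2)) t3)) t4)
    have hb2 : l ^ (-(5:ℝ)/2) ≤ 4 * l ^ (-(2:ℝ)) := rpow_le_four_mul hl (by norm_num) (by norm_num)
    have hb3 : l ^ (-(3:ℝ)) ≤ 4 * l ^ (-(2:ℝ)) := rpow_le_four_mul hl (by norm_num) (by norm_num)
    have hb4 : l ^ (-(7:ℝ)/2) ≤ 4 * l ^ (-(2:ℝ)) := rpow_le_four_mul hl (by norm_num) (by norm_num)
    have e1 : |(-(u^3/8))| = |u|^3/8 := by rw [abs_neg, abs_div, abs_pow]; norm_num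
    have e2 : |3*u^2/4| = 3*|u|^2/4 := by rw [abs_div, abs_mul, abs_pow]; norm_num [sq_abs]
    have e3 : |15*u/8| = 15*|u|/8 := by rw [abs_div, abs_mul]; norm_num
    have e4 : |(15:ℝ)/8| = 15/8 := by norm_num
    rw [e1, e2, e3, e4] at s1
    have hX := Real.rpow_nonneg hl0.le (-(2:ℝ))
    have hY := Real.rpow_nonneg hl0.le (-(5:ℝ)/2)
    have hZ := Real.rpow_nonneg hl0.le (-(3:ℝ))
    have hW := Real.rpow_nonneg hl0.le (-(7:ℝ)/2)
    nlinarith [pow_nonneg hLb 3, sq_nonneg Lb,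
      mul_le_mul_of_nonneg_right hu3 hX, mul_le_mul_of_nonneg_right hu2 hX,
      mul_le_mul_of_nonneg_right hu hX]
  | (n+4) =>
    have : gd (n+4) u l = 0 := rfl
    rw [this]
    simp only [abs_zero]
    positivity

lemma contDiffOn_gd0 (u : ℝ) : ContDiffOn ℝ (⊤:ℕ∞) (gd 0 u) (Ioi 0) := by
  intro l hl
  have hl0 : (0:ℝ) < l := hl
  have h1 : ContDiffAt ℝ (⊤:ℕ∞) (fun x : ℝ => Real.sin (Real.sqrt x * u)) l := by
    have hs : ContDiffAt ℝ (⊤:ℕ∞) (fun x : ℝ => Real.sqrt x * u) l :=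
      (Real.contDiffAt_sqrt hl0.ne').mul contDiffAt_const
    exact Real.contDiff_sin.contDiffAt.comp l hs
  have h2 : ContDiffAt ℝ (⊤:ℕ∞) (fun x : ℝ => x ^ (-(1:ℝ)/2)) l :=
    Real.contDiffAt_rpow_const_of_ne hl0.ne'
  exact ((h1.mul h2).contDiffWithinAt : ContDiffWithinAt ℝ (⊤:ℕ∞) _ (Ioi 0) l)

lemma eqon_deriv_iteratedDeriv_gd :
    ∀ u : ℝ, ∀ m : ℕ, m ≤ 3 → ∀ l ∈ Ioi (0:ℝ), iteratedDeriv m (gd 0 u) l = gd m u l := by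
  intro u
  have h1 : ∀ l ∈ Ioi (0:ℝ), iteratedDeriv 1 (gd 0 u) l = gd 1 u l := by
    intro l hl
    rw [iteratedDeriv_one]
    exact (hasDerivAt_gd0 u hl).deriv
  have h2 : ∀ l ∈ Ioi (0:ℝ), iteratedDeriv 2 (gd 0 u) l = gd 2 u l := by
    intro l hl
    rw [iteratedDeriv_succ]
    have := Filter.EventuallyEq.deriv_eq
      (Filter.eventuallyEq_of_mem (isOpen_Ioi.mem_nhds hl) h1)
    rw [this]
    exact (hasDerivAt_gd1 u hl).deriv
  have h3 : ∀ l ∈ Ioi (0:ℝ), iteratedDeriv 3 (gd 0 u) l = gd 3 u l := by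
    intro l hl
    rw [iteratedDeriv_succ]
    have := Filter.EventuallyEq.deriv_eq
      (Filter.eventuallyEq_of_mem (isOpen_Ioi.mem_nhds hl) h2)
    rw [this]
    exact (hasDerivAt_gd2 u hl).deriv
  intro m hm l hl
  interval_cases m
  · simp [iteratedDeriv_zero]
  · exact h1 l hl
  · exact h2 l hl
  · exact h3 l hl

lemma iFDW_gd0_bound {Lb : ℝ} (hLb : 0 ≤ Lb) {u : ℝ} (hu : |u| ≤ Lb) {m : ℕ} (hm : m ≤ 3)
    {l : ℝ} (hl : 1/2 ≤ l) :
    ‖iteratedFDerivWithin ℝ m (gd 0 u) (Ioi 0) l‖ ≤ 8 * (1+Lb)^3 * l ^ (-((m:ℝ)+1)/2) := by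
  have hl0 : (0:ℝ) < l := lt_of_lt_of_le (by norm_num) hl
  rw [iteratedFDerivWithin_of_isOpen m isOpen_Ioi hl0,
    norm_iteratedFDeriv_eq_norm_iteratedDeriv, Real.norm_eq_abs,
    eqon_deriv_iteratedDeriv_gd u m hm l hl0]
  exact gd_bound hLb hu m hl

lemma binom_aux (n m : ℕ) :
    ∑ i ∈ Finset.range (m+1), ((n:ℝ)+1)^(m-i) * (m.choose i : ℝ) = ((n:ℝ)+2)^m := by
  have h := add_pow (1:ℝ) ((n:ℝ)+1) m
  simp only [one_pow, one_mul] at h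
  rw [show (1 + ((n:ℝ)+1)) = (n:ℝ)+2 by ring] at h
  exact h.symm

lemma prod_iFDW_bound {ι : Type*} (A : ℝ) (hA : 1 ≤ A) (s : Finset ι) (f : ι → ℝ → ℝ)
    (hsm : ∀ j ∈ s, ContDiffOn ℝ (⊤:ℕ∞) (f j) (Ioi 0))
    (hbd : ∀ j ∈ s, ∀ m : ℕ, m ≤ 3 → ∀ l : ℝ, 1/2 ≤ l →
      ‖iteratedFDerivWithin ℝ m (f j) (Ioi 0) l‖ ≤ A * l ^ (-((m:ℝ)+1)/2)) :
    ∀ m : ℕ, m ≤ 3 → ∀ l : ℝ, 1/2 ≤ l →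
      ‖iteratedFDerivWithin ℝ m (fun x => ∏ j ∈ s, f j x) (Ioi 0) l‖ ≤
        (2*A)^s.card * ((s.card:ℝ) + 1)^m * l ^ (-((s.card:ℝ) + m)/2) := by
  induction s using Finset.cons_induction with
  | empty =>
    intro m hm l hl
    have hl0 : (0:ℝ) < l := lt_of_lt_of_le (by norm_num) hl
    simp only [Finset.prod_empty, Finset.card_empty, Nat.cast_zero, pow_zero, one_mul]
    match m with
    | 0 =>
      rw [norm_iteratedFDerivWithin_zero]
      simp only [norm_one, Nat.cast_zero]
      rw [show (-((0:ℝ) + 0)/2) = 0 by norm_num, Real.rpow_zero]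
      norm_num
    | (m+1) =>
      rw [iteratedFDerivWithin_const_of_ne (Nat.succ_ne_zero m) _ _]
      simp only [Pi.zero_apply, norm_zero]
      positivity
  | cons a s ha ih =>
    intro m hm l hl
    have hl0 : (0:ℝ) < l := lt_of_lt_of_le (by norm_num) hl
    have hA0 : (0:ℝ) < A := lt_of_lt_of_le one_pos hA
    set n := s.card with hn
    have hsmA : ContDiffOn ℝ (⊤:ℕ∞) (f a) (Ioi 0) := hsm a (Finset.mem_cons_self a s)
    have hsmS : ContDiffOn ℝ (⊤:ℕ∞) (fun x => ∏ j ∈ s, f j x) (Ioi 0) :=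
      contDiffOn_prod (fun j hj => hsm j (Finset.mem_cons_of_mem hj))
    have hfun : (fun x => ∏ j ∈ Finset.cons a s ha, f j x)
        = fun x => f a x * ∏ j ∈ s, f j x := by
      funext x; rw [Finset.prod_cons]
    rw [hfun]
    have hmul := norm_iteratedFDerivWithin_mul_le (𝕜 := ℝ) hsmA hsmS
      isOpen_Ioi.uniqueDiffOn (show l ∈ Ioi (0:ℝ) from hl0) (n := m)
      (by exact_mod_cast le_top)
    refine hmul.trans ?_
    have hstep : ∀ i ∈ Finset.range (m+1),
        (m.choose i : ℝ) * ‖iteratedFDerivWithin ℝ i (f a) (Ioi 0) l‖ *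
          ‖iteratedFDerivWithin ℝ (m-i) (fun x => ∏ j ∈ s, f j x) (Ioi 0) l‖ ≤
        (((n:ℝ)+1)^(m-i) * (m.choose i : ℝ)) *
          (A * (2*A)^n * l ^ (-((n:ℝ) + 1 + m)/2)) := by
      intro i hi
      have hiM : i ≤ m := Finset.mem_range_succ_iff.mp hi
      have h1 := hbd a (Finset.mem_cons_self a s) i (hiM.trans hm) l hl
      have h2 := ih (fun j hj => hsm j (Finset.mem_cons_of_mem hj))
        (fun j hj => hbd j (Finset.mem_cons_of_mem hj)) (m-i) ((Nat.sub_le m i).trans hm) l hl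
      have hle : (m.choose i : ℝ) * ‖iteratedFDerivWithin ℝ i (f a) (Ioi 0) l‖ *
          ‖iteratedFDerivWithin ℝ (m-i) (fun x => ∏ j ∈ s, f j x) (Ioi 0) l‖ ≤
          (m.choose i : ℝ) * (A * l ^ (-((i:ℝ)+1)/2)) *
          ((2*A)^n * ((n:ℝ) + 1)^(m-i) * l ^ (-((n:ℝ) + ((m-i:ℕ):ℝ))/2)) := by
        apply mul_le_mul _ h2 (norm_nonneg _) (by positivity)
        exact mul_le_mul_of_nonneg_left h1 (Nat.cast_nonneg _)
      refine hle.trans (le_of_eq ?_)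
      have hmerge : l ^ (-((i:ℝ)+1)/2) * l ^ (-((n:ℝ) + ((m-i:ℕ):ℝ))/2)
          = l ^ (-((n:ℝ) + 1 + m)/2) := by
        rw [← Real.rpow_add hl0]
        congr 1
        rw [Nat.cast_sub hiM]; ring
      rw [← hmerge]; ring
    refine (Finset.sum_le_sum hstep).trans ?_
    rw [← Finset.sum_mul, binom_aux]
    have hcard : (Finset.cons a s ha).card = n + 1 := by rw [Finset.card_cons]
    rw [hcard]
    have hpow : A * (2*A)^n ≤ (2*A)^(n+1) := by
      rw [pow_succ]
      nlinarith [pow_nonneg (by linarith : (0:ℝ) ≤ 2*A) n]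
    have hrp : (0:ℝ) ≤ l ^ (-((n:ℝ) + 1 + m)/2) := Real.rpow_nonneg hl0.le _
    have hnn : (0:ℝ) ≤ ((n:ℝ)+2)^m := by positivity
    have hcast1 : ((n+1:ℕ):ℝ) + 1 = (n:ℝ) + 2 := by push_cast; ring
    have hcast2 : (-(((n+1:ℕ):ℝ) + m)/2) = -((n:ℝ) + 1 + m)/2 := by push_cast; ring
    rw [hcast1, hcast2]
    calc ((n:ℝ)+2)^m * (A * (2*A)^n * l ^ (-((n:ℝ) + 1 + m)/2))
        ≤ ((n:ℝ)+2)^m * ((2*A)^(n+1) * l ^ (-((n:ℝ) + 1 + m)/2)) := by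
          apply mul_le_mul_of_nonneg_left _ hnn
          exact mul_le_mul_of_nonneg_right hpow hrp
      _ = (2*A)^(n+1) * ((n:ℝ) + 2)^m * l ^ (-((n:ℝ) + 1 + m)/2) := by ring

lemma simplexSet_isClosed (L : ℝ) (k : ℕ) : IsClosed (simplexSet L k) := by
  have h1 : simplexSet L k =
      (⋂ (i : Fin k) (j : Fin k), {t : Fin k → ℝ | i ≤ j → t i ≤ t j}) ∩
      (⋂ (i : Fin k), (fun t : Fin k → ℝ => t i) ⁻¹' Icc (0:ℝ) L) := by
    ext t
    simp only [simplexSet, mem_setOf_eq, mem_inter_iff, mem_iInter, mem_preimage]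
    constructor
    · rintro ⟨hm, hb⟩
      exact ⟨fun i j hij => hm hij, hb⟩
    · rintro ⟨hm, hb⟩
      exact ⟨fun i j hij => hm i j hij, hb⟩
  rw [h1]
  apply IsClosed.inter
  · apply isClosed_iInter; intro i
    apply isClosed_iInter; intro j
    by_cases hij : i ≤ j
    · have : {t : Fin k → ℝ | i ≤ j → t i ≤ t j} = {t | t i ≤ t j} := by
        ext t; simp [hij]
      rw [this]
      exact isClosed_le (continuous_apply i) (continuous_apply j)
    · have : {t : Fin k → ℝ | i ≤ j → t i ≤ t j} = univ := by
        ext t; simp [hij]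
      rw [this]; exact isClosed_univ
  · exact isClosed_iInter fun i => (isClosed_Icc).preimage (continuous_apply i)

lemma simplexSet_measurableSet (L : ℝ) (k : ℕ) : MeasurableSet (simplexSet L k) :=
  (simplexSet_isClosed L k).measurableSet

lemma hyperplane_null {k : ℕ} {i j : Fin k} (hij : i ≠ j) :
    volume {t : Fin k → ℝ | t i = t j} = 0 := by
  classical
  set φ : (Fin k → ℝ) →ₗ[ℝ] ℝ := (LinearMap.proj i : (Fin k → ℝ) →ₗ[ℝ] ℝ) - LinearMap.proj j
    with hφ
  have hset : {t : Fin k → ℝ | t i = t j} = (LinearMap.ker φ : Set (Fin k → ℝ)) := by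
    ext t
    simp only [mem_setOf_eq, SetLike.mem_coe, LinearMap.mem_ker, hφ, LinearMap.sub_apply,
      LinearMap.proj_apply, sub_eq_zero]
  rw [hset]
  apply Measure.addHaar_submodule
  intro htop
  have h1 : (Pi.single i (1:ℝ)) ∈ LinearMap.ker φ := htop ▸ Submodule.mem_top
  rw [LinearMap.mem_ker, hφ] at h1
  simp only [LinearMap.sub_apply, LinearMap.proj_apply] at h1
  rw [Pi.single_eq_same, Pi.single_eq_of_ne (Ne.symm hij)] at h1
  norm_num at h1

lemma volume_simplexSet_le (L : ℝ) (hL : 0 < L) (k : ℕ) :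
    (volume (simplexSet L k)).toReal ≤ L ^ k / (Nat.factorial k) := by
  classical
  set box : Set (Fin k → ℝ) := Set.pi univ (fun _ => Icc (0:ℝ) L) with hbox
  have hboxvol : volume box = (ENNReal.ofReal L) ^ k := by
    rw [hbox, volume_pi_pi]
    simp [Real.volume_Icc]
  set A : Equiv.Perm (Fin k) → Set (Fin k → ℝ) :=
    fun σ => {t | StrictMono (t ∘ σ)} ∩ box with hA
  have hmeasA : ∀ σ, MeasurableSet (A σ) := by
    intro σ
    apply MeasurableSet.inter
    · have : {t : Fin k → ℝ | StrictMono (t ∘ σ)} =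
          ⋂ (i : Fin k) (j : Fin k), {t : Fin k → ℝ | i < j → t (σ i) < t (σ j)} := by
        ext t
        simp only [mem_setOf_eq, mem_iInter]
        exact ⟨fun h i j hij => h hij, fun h i j hij => h i j hij⟩
      rw [this]
      refine MeasurableSet.iInter fun i => MeasurableSet.iInter fun j => ?_
      by_cases hij : i < j
      · have : {t : Fin k → ℝ | i < j → t (σ i) < t (σ j)} = {t | t (σ i) < t (σ j)} := by
          ext t; simp [hij]
        rw [this]
        exact measurableSet_lt (measurable_pi_apply _) (measurable_pi_apply _)
      · have : {t : Fin k → ℝ | i < j → t (σ i) < t (σ j)} = univ := by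
          ext t; simp [hij]
        rw [this]; exact MeasurableSet.univ
    · exact MeasurableSet.univ_pi fun i => measurableSet_Icc
  have hsame : ∀ σ : Equiv.Perm (Fin k), volume (A σ) = volume (A 1) := by
    intro σ
    have hmp := MeasureTheory.volume_preserving_arrowCongr' (β₁ := ℝ) (β₂ := ℝ)
      σ.symm (MeasurableEquiv.refl ℝ) (MeasurePreserving.id _)
    have het : ∀ t : Fin k → ℝ,
        (MeasurableEquiv.arrowCongr' σ.symm (MeasurableEquiv.refl ℝ)) t = t ∘ σ :=
      fun t => funext fun i => rfl
    have hpre : A σ = (MeasurableEquiv.arrowCongr' σ.symm (MeasurableEquiv.refl ℝ)) ⁻¹' (A 1) := by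
      ext t
      simp only [hA, mem_inter_iff, mem_setOf_eq, mem_preimage, het, Equiv.Perm.coe_one,
        Function.comp_id, hbox, mem_univ_pi]
      constructor
      · rintro ⟨hs, hb⟩
        refine ⟨hs, fun i => ?_⟩
        exact hb (σ i)
      · rintro ⟨hs, hb⟩
        refine ⟨hs, fun i => ?_⟩
        have := hb (σ.symm i)
        simpa using this
    rw [hpre, hmp.measure_preimage (hmeasA 1).nullMeasurableSet]
  have hdisj : ∀ σ τ : Equiv.Perm (Fin k), σ ≠ τ → Disjoint (A σ) (A τ) := by
    intro σ τ hne
    rw [Set.disjoint_left]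
    rintro t ⟨hsσ, _⟩ ⟨hsτ, _⟩
    apply hne
    have htinj : Function.Injective t := by
      have ht : t = (t ∘ σ) ∘ σ.symm := by funext x; simp
      rw [ht]
      exact hsσ.injective.comp σ.symm.injective
    have hrange : range (t ∘ σ) = range (t ∘ τ) := by
      rw [Function.Surjective.range_comp σ.surjective t,
        Function.Surjective.range_comp τ.surjective t]
    haveI : WellFoundedLT (Fin k) := Finite.to_wellFoundedLT
    have hfun := hsσ.range_inj hsτ |>.mp hrange
    exact Equiv.ext fun x => htinj (congrFun hfun x)
  have hunion : (⋃ σ ∈ (Finset.univ : Finset (Equiv.Perm (Fin k))), A σ) ⊆ box :=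
    iUnion₂_subset fun σ _ => inter_subset_right
  have hsum : ∑ σ : Equiv.Perm (Fin k), volume (A σ) ≤ (ENNReal.ofReal L) ^ k := by
    rw [← measure_biUnion_finset (fun σ _ τ _ hne => hdisj σ τ hne) (fun σ _ => hmeasA σ)]
    exact le_trans (measure_mono hunion) (le_of_eq hboxvol)
  have hcard : ∑ σ : Equiv.Perm (Fin k), volume (A σ)
      = (Nat.factorial k : ENNReal) * volume (A 1) := by
    rw [Finset.sum_congr rfl (fun σ _ => hsame σ), Finset.sum_const, Finset.card_univ,
      Fintype.card_perm, Fintype.card_fin, nsmul_eq_mul]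
  set N : Set (Fin k → ℝ) := ⋃ (i : Fin k) (j : Fin k) (_ : i ≠ j), {t : Fin k → ℝ | t i = t j}
    with hN
  have hsub : simplexSet L k ⊆ A 1 ∪ N := by
    rintro t ⟨hm, hb⟩
    by_cases hinj : Function.Injective t
    · left
      refine ⟨?_, ?_⟩
      · have hsm : StrictMono t := hm.strictMono_of_injective hinj
        intro x y hxy
        simp only [Function.comp_apply, Equiv.Perm.one_apply]
        exact hsm hxy
      · rw [hbox, mem_univ_pi]
        intro i
        exact hb i
    · right
      simp only [Function.Injective, not_forall] at hinj
      obtain ⟨x, y, hxy, hne⟩ := hinj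
      rw [hN]
      simp only [mem_iUnion]
      exact ⟨x, y, hne, hxy⟩
  have hnull : volume N = 0 := by
    rw [hN]
    exact measure_iUnion_null fun i => measure_iUnion_null fun j =>
      measure_iUnion_null fun hij => hyperplane_null hij
  have hle1 : volume (simplexSet L k) ≤ volume (A 1) := by
    calc volume (simplexSet L k) ≤ volume (A 1 ∪ N) := measure_mono hsub
      _ ≤ volume (A 1) + volume N := measure_union_le _ _
      _ = volume (A 1) := by rw [hnull, add_zero]
  have hmain : (Nat.factorial k : ENNReal) * volume (simplexSet L k)
      ≤ (ENNReal.ofReal L) ^ k := by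
    calc (Nat.factorial k : ENNReal) * volume (simplexSet L k)
        ≤ (Nat.factorial k : ENNReal) * volume (A 1) := mul_le_mul_right hle1 _
      _ = ∑ σ : Equiv.Perm (Fin k), volume (A σ) := hcard.symm
      _ ≤ (ENNReal.ofReal L) ^ k := hsum
  have hofReal : (ENNReal.ofReal L) ^ k = ENNReal.ofReal (L ^ k) := by
    rw [← ENNReal.ofReal_pow hL.le]
  rw [hofReal] at hmain
  have htoReal : (Nat.factorial k : ℝ) * (volume (simplexSet L k)).toReal ≤ L ^ k := by
    have h1 := ENNReal.toReal_le_of_le_ofReal (by positivity) hmain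
    rwa [ENNReal.toReal_mul, ENNReal.toReal_natCast] at h1
  have hfac : (0:ℝ) < (Nat.factorial k : ℝ) := by
    exact_mod_cast Nat.factorial_pos k
  rw [le_div_iff₀ hfac]
  linarith [htoReal]

lemma extSeq_mem_Icc {L : ℝ} (hL : 0 ≤ L) {k : ℕ} {t : Fin k → ℝ}
    (ht : t ∈ simplexSet L k) (i : Fin (k+2)) : extSeq L t i ∈ Icc (0:ℝ) L := by
  induction i using Fin.lastCases with
  | last =>
    rw [extSeq, Fin.snoc_last]
    exact ⟨hL, le_refl L⟩
  | cast j =>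
    rw [extSeq, Fin.snoc_castSucc]
    induction j using Fin.cases with
    | zero =>
      rw [Fin.cons_zero]
      exact ⟨le_refl 0, hL⟩
    | succ m =>
      rw [Fin.cons_succ]
      exact ht.2 m

lemma continuous_extSeq (L : ℝ) {k : ℕ} (i : Fin (k+2)) :
    Continuous (fun t : Fin k → ℝ => extSeq L t i) := by
  induction i using Fin.lastCases with
  | last =>
    simp only [extSeq, Fin.snoc_last]
    exact continuous_const
  | cast j =>
    simp only [extSeq, Fin.snoc_castSucc]
    induction j using Fin.cases with
    | zero =>
      simp only [Fin.cons_zero]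
      exact continuous_const
    | succ m =>
      simp only [Fin.cons_succ]
      exact continuous_apply m

lemma contDiffOn_iteratedDeriv' {f : ℝ → ℝ} {s : Set ℝ} (hs : IsOpen s)
    (hf : ContDiffOn ℝ (⊤:ℕ∞) f s) : ∀ m : ℕ, ContDiffOn ℝ (⊤:ℕ∞) (iteratedDeriv m f) s := by
  intro m
  induction m with
  | zero => simpa [iteratedDeriv_zero] using hf
  | succ m ih =>
    have h : iteratedDeriv (m+1) f = deriv (iteratedDeriv m f) := iteratedDeriv_succ
    rw [h]
    exact ih.deriv_of_isOpen hs (by simp)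

lemma hasDerivAt_iteratedDeriv' {f : ℝ → ℝ} {s : Set ℝ} (hs : IsOpen s)
    (hf : ContDiffOn ℝ (⊤:ℕ∞) f s) (m : ℕ) {l : ℝ} (hl : l ∈ s) :
    HasDerivAt (iteratedDeriv m f) (iteratedDeriv (m+1) f l) l := by
  have hm := contDiffOn_iteratedDeriv' hs hf m
  have hd : DifferentiableAt ℝ (iteratedDeriv m f) l :=
    (hm.differentiableOn (by simp)).differentiableAt (hs.mem_nhds hl)
  have h2 := hd.hasDerivAt
  rwa [show deriv (iteratedDeriv m f) l = iteratedDeriv (m+1) f l from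
    (congrFun iteratedDeriv_succ l).symm] at h2

lemma aesm_deriv_family {α : Type*} [MeasurableSpace α] {μ : Measure α}
    {F : α → ℝ → ℝ} {s : Set ℝ} (hs : IsOpen s)
    (hmeas : ∀ l ∈ s, AEStronglyMeasurable (fun t => F t l) μ)
    (hdiff : ∀ t, ∀ l ∈ s, DifferentiableAt ℝ (F t) l)
    {l : ℝ} (hl : l ∈ s) :
    AEStronglyMeasurable (fun t => deriv (F t) l) μ := by
  obtain ⟨ε, hε, hball⟩ := Metric.isOpen_iff.mp hs l hl
  have hδ : ∀ n : ℕ, 0 < ε/2/(n+1) := by intro n; positivity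
  have hδε : ∀ n : ℕ, ε/2/(n+1) < ε := by
    intro n
    have h1 : ε/2/(n+1) ≤ ε/2 :=
      div_le_self (by positivity) (by linarith [Nat.cast_nonneg (α := ℝ) n])
    linarith
  have hseq : ∀ n : ℕ, l + ε/2/(n+1) ∈ s := by
    intro n
    apply hball
    rw [Metric.mem_ball, Real.dist_eq]
    rw [show l + ε/2/(n+1) - l = ε/2/(n+1) by ring, abs_of_pos (hδ n)]
    exact hδε n
  apply aestronglyMeasurable_of_tendsto_ae (u := Filter.atTop)
    (f := fun (n:ℕ) (t:α) => (F t (l + ε/2/(n+1)) - F t l) * (ε/2/(n+1))⁻¹)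
  · intro n
    exact ((hmeas _ (hseq n)).sub (hmeas l hl)).mul aestronglyMeasurable_const
  · apply Filter.Eventually.of_forall
    intro t
    have hd := (hdiff t l hl).hasDerivAt
    rw [hasDerivAt_iff_tendsto_slope] at hd
    have htend0 : Filter.Tendsto (fun n : ℕ => l + ε/2/(n+1)) Filter.atTop (nhds l) := by
      have h1 : Filter.Tendsto (fun n : ℕ => ε/2/(n+1)) Filter.atTop (nhds 0) := by
        have h2 : Filter.Tendsto (fun n : ℕ => ((n:ℝ)+1)) Filter.atTop Filter.atTop :=
          Filter.tendsto_atTop_add_const_right _ 1 tendsto_natCast_atTop_atTop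
        have := Filter.Tendsto.div_atTop (tendsto_const_nhds (x := ε/2)) h2
        simpa using this
      have := Filter.Tendsto.add (tendsto_const_nhds (x := l)) h1
      simpa using this
    have htend : Filter.Tendsto (fun n : ℕ => l + ε/2/(n+1)) Filter.atTop (nhdsWithin l {l}ᶜ) := by
      rw [tendsto_nhdsWithin_iff]
      exact ⟨htend0, Filter.Eventually.of_forall fun n => by
        simp only [mem_compl_iff, mem_singleton_iff]
        intro h
        have := hδ n
        nlinarith [hδ n]⟩
    have hcomp := hd.comp htend
    convert hcomp using 2 with n
    simp only [Function.comp_apply, slope_def_field]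
    rw [show l + ε/2/(n+1) - l = ε/2/(n+1) by ring, div_eq_mul_inv]
    ring_nf
noncomputable def Fp (L : ℝ) (W : ℝ → ℝ) (k : ℕ) (t : Fin k → ℝ) (l : ℝ) : ℝ :=
  (∏ j : Fin (k+1), gd 0 (extSeq L t j.succ - extSeq L t j.castSucc) l) * ∏ j : Fin k, W (t j)

lemma Fp_eq_integrand (L : ℝ) (W : ℝ → ℝ) (k : ℕ) (t : Fin k → ℝ) {l : ℝ} (hl : 0 < l) :
    l ^ (-((k:ℝ)+1)/2) *
      (∏ j : Fin (k+1),
        Real.sin (Real.sqrt l * (extSeq L t j.succ - extSeq L t j.castSucc))) *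
      (∏ j : Fin k, W (t j)) = Fp L W k t l := by
  have h1 : (∏ j : Fin (k+1), gd 0 (extSeq L t j.succ - extSeq L t j.castSucc) l)
      = (∏ j : Fin (k+1),
          Real.sin (Real.sqrt l * (extSeq L t j.succ - extSeq L t j.castSucc)))
        * (l ^ (-(1:ℝ)/2)) ^ (k+1) := by
    rw [show (∏ j : Fin (k+1), gd 0 (extSeq L t j.succ - extSeq L t j.castSucc) l)
        = ∏ j : Fin (k+1),
          (Real.sin (Real.sqrt l * (extSeq L t j.succ - extSeq L t j.castSucc))
            * l ^ (-(1:ℝ)/2)) from rfl]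
    rw [Finset.prod_mul_distrib, Finset.prod_const]
    simp [Finset.card_univ]
  have h2 : (l ^ (-(1:ℝ)/2)) ^ (k+1) = l ^ (-((k:ℝ)+1)/2) := by
    rw [← Real.rpow_natCast (l ^ (-(1:ℝ)/2)) (k+1), ← Real.rpow_mul hl.le]
    congr 1
    push_cast
    ring
  rw [Fp, h1, h2]
  ring

lemma contDiffOn_Fp (L : ℝ) (W : ℝ → ℝ) (k : ℕ) (t : Fin k → ℝ) :
    ContDiffOn ℝ (⊤:ℕ∞) (Fp L W k t) (Ioi 0) := by
  have h1 : ContDiffOn ℝ (⊤:ℕ∞)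
      (fun l => ∏ j : Fin (k+1), gd 0 (extSeq L t j.succ - extSeq L t j.castSucc) l) (Ioi 0) :=
    contDiffOn_prod (fun j _ => contDiffOn_gd0 _)
  exact h1.mul contDiffOn_const

lemma abs_sub_le_of_Icc {L a b : ℝ} (ha : a ∈ Icc (0:ℝ) L) (hb : b ∈ Icc (0:ℝ) L) :
    |a - b| ≤ L := by
  rw [abs_sub_le_iff]
  constructor <;> [skip; skip] <;> {
    first
    | (obtain ⟨ha1, ha2⟩ := ha; obtain ⟨hb1, hb2⟩ := hb; linarith) }

lemma Fp_iFDW_bound {L M : ℝ} (hL : 0 < L) {W : ℝ → ℝ}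
    (hM : ∀ x ∈ Icc (0:ℝ) L, |W x| ≤ M) {k m : ℕ} (hm : m ≤ 3)
    {t : Fin k → ℝ} (ht : t ∈ simplexSet L k) {l : ℝ} (hl : 1/2 ≤ l) :
    |iteratedDeriv m (Fp L W k t) l| ≤
      M^k * ((2*(8*(1+L)^3))^(k+1) * (((k:ℝ)+1) + 1)^m * l ^ (-(((k:ℝ)+1) + m)/2)) := by
  classical
  set A : ℝ := 8*(1+L)^3 with hAdef
  have hA1 : (1:ℝ) ≤ A := by
    have h1 : (1:ℝ) ≤ (1+L)^3 := one_le_pow₀ (by linarith)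
    rw [hAdef]; linarith
  have hl0 : (0:ℝ) < l := lt_of_lt_of_le (by norm_num) hl
  have hM0 : 0 ≤ M := le_trans (abs_nonneg _) (hM 0 ⟨le_refl 0, hL.le⟩)
  -- rewrite as iteratedFDerivWithin
  rw [show |iteratedDeriv m (Fp L W k t) l| = ‖iteratedDeriv m (Fp L W k t) l‖ from rfl,
    ← norm_iteratedFDeriv_eq_norm_iteratedDeriv,
    ← iteratedFDerivWithin_of_isOpen (f := Fp L W k t) m isOpen_Ioi hl0]
  -- the product part and constant part
  set P : ℝ → ℝ := fun l => ∏ j : Fin (k+1), gd 0 (extSeq L t j.succ - extSeq L t j.castSucc) l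
    with hP
  set c : ℝ := ∏ j : Fin k, W (t j) with hc
  have hPsm : ContDiffOn ℝ (⊤:ℕ∞) P (Ioi 0) := contDiffOn_prod (fun j _ => contDiffOn_gd0 _)
  have hfun : Fp L W k t = fun l => P l * c := rfl
  rw [hfun]
  have hmul := norm_iteratedFDerivWithin_mul_le (𝕜 := ℝ) hPsm
    (contDiffOn_const : ContDiffOn ℝ ((⊤:ℕ∞) : ℕ∞) (fun _ : ℝ => c) (Ioi 0))
    isOpen_Ioi.uniqueDiffOn (show l ∈ Ioi (0:ℝ) from hl0) (n := m)
    (by exact_mod_cast le_top)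
  refine hmul.trans ?_
  -- only the i = m term survives
  have hsum : ∑ i ∈ Finset.range (m+1),
      (m.choose i : ℝ) * ‖iteratedFDerivWithin ℝ i P (Ioi 0) l‖ *
        ‖iteratedFDerivWithin ℝ (m-i) (fun _ : ℝ => c) (Ioi 0) l‖
      = ‖iteratedFDerivWithin ℝ m P (Ioi 0) l‖ * ‖c‖ := by
    rw [Finset.sum_eq_single_of_mem m (Finset.self_mem_range_succ m)]
    · rw [Nat.choose_self, Nat.sub_self, norm_iteratedFDerivWithin_zero]
      push_cast; ring
    · intro i hi hne
      have him : i < m := lt_of_le_of_ne (Finset.mem_range_succ_iff.mp hi) hne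
      rw [iteratedFDerivWithin_const_of_ne (Nat.sub_ne_zero_of_lt him) _
        _]
      simp
  rw [hsum]
  -- bound the product part
  have hDD : ∀ j : Fin (k+1), |extSeq L t j.succ - extSeq L t j.castSucc| ≤ L := fun j =>
    abs_sub_le_of_Icc (extSeq_mem_Icc hL.le ht _) (extSeq_mem_Icc hL.le ht _)
  have hPbound := prod_iFDW_bound A hA1 (Finset.univ : Finset (Fin (k+1)))
    (fun j => gd 0 (extSeq L t j.succ - extSeq L t j.castSucc))
    (fun j _ => contDiffOn_gd0 _)
    (fun j _ m' hm' l' hl' => iFDW_gd0_bound hL.le (hDD j) hm' hl')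
    m hm l hl
  have hcardu : (Finset.univ : Finset (Fin (k+1))).card = k + 1 := by
    rw [Finset.card_univ, Fintype.card_fin]
  rw [hcardu] at hPbound
  have hcbound : ‖c‖ ≤ M^k := by
    rw [hc, Real.norm_eq_abs, Finset.abs_prod]
    calc ∏ j : Fin k, |W (t j)| ≤ ∏ j : Fin k, M :=
          Finset.prod_le_prod (fun j _ => abs_nonneg _) (fun j _ => hM (t j) (ht.2 j))
      _ = M ^ k := by rw [Finset.prod_const, Finset.card_univ, Fintype.card_fin]
  have hcast : ((k+1:ℕ):ℝ) = (k:ℝ) + 1 := by push_cast; ring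
  rw [hcast] at hPbound
  calc ‖iteratedFDerivWithin ℝ m P (Ioi 0) l‖ * ‖c‖
      ≤ ((2*A)^(k+1) * ((k:ℝ)+1+1)^m * l ^ (-((k:ℝ)+1+m)/2)) * M^k := by
        apply mul_le_mul hPbound hcbound (norm_nonneg _)
        positivity
    _ = M^k * ((2*A)^(k+1) * (((k:ℝ)+1) + 1)^m * l ^ (-(((k:ℝ)+1) + m)/2)) := by ring
lemma volume_simplexSet_lt_top (L : ℝ) (k : ℕ) : volume (simplexSet L k) < ⊤ := by
  have hsub : simplexSet L k ⊆ Set.pi univ (fun _ : Fin k => Icc (0:ℝ) L) := by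
    intro t ht
    rw [mem_univ_pi]
    exact ht.2
  calc volume (simplexSet L k) ≤ volume (Set.pi univ (fun _ : Fin k => Icc (0:ℝ) L)) :=
        measure_mono hsub
    _ = (ENNReal.ofReal L) ^ k := by rw [volume_pi_pi]; simp [Real.volume_Icc]
    _ < ⊤ := by
        apply ENNReal.pow_lt_top
        exact ENNReal.ofReal_lt_top

lemma aesm_Fp {L : ℝ} (hL : 0 < L) {W : ℝ → ℝ} (hW : ContinuousOn W (Icc 0 L)) (k : ℕ) :
    ∀ m : ℕ, ∀ l ∈ Ioi (0:ℝ),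
      AEStronglyMeasurable (fun t : Fin k → ℝ => iteratedDeriv m (Fp L W k t) l)
        (volume.restrict (simplexSet L k)) := by
  intro m
  induction m with
  | zero =>
    intro l hl
    simp only [iteratedDeriv_zero]
    have hcont : ContinuousOn (fun t : Fin k → ℝ => Fp L W k t l) (simplexSet L k) := by
      apply ContinuousOn.mul
      · apply Continuous.continuousOn
        apply continuous_finset_prod
        intro j _
        show Continuous fun t : Fin k → ℝ =>
          Real.sin (Real.sqrt l * (extSeq L t j.succ - extSeq L t j.castSucc)) * l ^ (-(1:ℝ)/2)
        exact (Real.continuous_sin.comp (continuous_const.mul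
          ((continuous_extSeq L j.succ).sub (continuous_extSeq L j.castSucc)))).mul
          continuous_const
      · apply continuousOn_finset_prod
        intro j _
        exact hW.comp (continuous_apply j).continuousOn (fun t ht => ht.2 j)
    exact hcont.aestronglyMeasurable (simplexSet_measurableSet L k)
  | succ m ih =>
    intro l hl
    simp only [iteratedDeriv_succ]
    exact aesm_deriv_family isOpen_Ioi ih
      (fun t l' hl' =>
        (hasDerivAt_iteratedDeriv' isOpen_Ioi (contDiffOn_Fp L W k t) m hl').differentiableAt)
      hl

noncomputable def Tfun (L : ℝ) (W : ℝ → ℝ) (m k : ℕ) (l : ℝ) : ℝ :=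
  ∫ t in simplexSet L k, iteratedDeriv m (Fp L W k t) l

lemma Sfun_eq_Tfun (L : ℝ) (W : ℝ → ℝ) (k : ℕ) {l : ℝ} (hl : 0 < l) :
    Sfun L W k l = Tfun L W 0 k l := by
  rw [Sfun, Tfun]
  refine integral_congr_ae (Filter.Eventually.of_forall fun t => ?_)
  simp only [iteratedDeriv_zero]
  exact Fp_eq_integrand L W k t hl

lemma rpow_neg_le_two_rpow {x e : ℝ} (hx : 1/2 ≤ x) (he : 0 ≤ e) :
    x ^ (-e) ≤ 2 ^ e := by
  have h1 : x ^ (-e) ≤ (1/2:ℝ) ^ (-e) :=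
    Real.rpow_le_rpow_of_nonpos (by norm_num) hx (by linarith)
  have h2 : (1/2:ℝ) ^ (-e) = 2 ^ e := by
    rw [show (1/2:ℝ) = 2⁻¹ by norm_num, Real.inv_rpow (by norm_num), ← Real.rpow_neg (by norm_num),
      neg_neg]
  linarith [h1, h2.le, h2.ge]

lemma Tfun_bound {L M : ℝ} (hL : 0 < L) {W : ℝ → ℝ}
    (hM : ∀ x ∈ Icc (0:ℝ) L, |W x| ≤ M) {m : ℕ} (hm : m ≤ 3) (k : ℕ) {l : ℝ} (hl : 1/2 ≤ l) :
    |Tfun L W m k l| ≤ (L^k / (Nat.factorial k)) *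
      (M^k * ((2*(8*(1+L)^3))^(k+1) * (((k:ℝ)+1) + 1)^m * l ^ (-(((k:ℝ)+1) + m)/2))) := by
  have hM0 : 0 ≤ M := le_trans (abs_nonneg _) (hM 0 ⟨le_refl 0, hL.le⟩)
  have hl0 : (0:ℝ) < l := lt_of_lt_of_le (by norm_num) hl
  haveI : IsFiniteMeasure (volume.restrict (simplexSet L k)) := by
    constructor
    rw [Measure.restrict_apply_univ]
    exact volume_simplexSet_lt_top L k
  set B : ℝ := M^k * ((2*(8*(1+L)^3))^(k+1) * (((k:ℝ)+1) + 1)^m * l ^ (-(((k:ℝ)+1) + m)/2))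
    with hB
  have hB0 : 0 ≤ B := by rw [hB]; positivity
  have h1 : ‖∫ t in simplexSet L k, iteratedDeriv m (Fp L W k t) l‖
      ≤ B * (volume.restrict (simplexSet L k) univ).toReal := by
    apply norm_integral_le_of_norm_le_const
    rw [ae_restrict_iff' (simplexSet_measurableSet L k)]
    refine Filter.Eventually.of_forall fun t ht => ?_
    rw [Real.norm_eq_abs]
    exact Fp_iFDW_bound hL hM hm ht hl
  rw [Tfun, ← Real.norm_eq_abs]
  refine h1.trans ?_
  rw [Measure.restrict_apply_univ]
  calc B * (volume (simplexSet L k)).toReal ≤ B * (L^k / (Nat.factorial k)) :=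
        mul_le_mul_of_nonneg_left (volume_simplexSet_le L hL k) hB0
    _ = (L^k / (Nat.factorial k)) * B := by ring

lemma hasDerivAt_Tfun {L M : ℝ} (hL : 0 < L) {W : ℝ → ℝ} (hW : ContinuousOn W (Icc 0 L))
    (hM : ∀ x ∈ Icc (0:ℝ) L, |W x| ≤ M) {m : ℕ} (hm : m ≤ 2) (k : ℕ) {l₀ : ℝ}
    (hl₀ : l₀ ∈ Ioi (1/2:ℝ)) :
    HasDerivAt (Tfun L W m k) (Tfun L W (m+1) k l₀) l₀ := by
  have hM0 : 0 ≤ M := le_trans (abs_nonneg _) (hM 0 ⟨le_refl 0, hL.le⟩)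
  have hl₀h : (1/2:ℝ) < l₀ := hl₀
  have hl₀0 : (0:ℝ) < l₀ := lt_trans (by norm_num) hl₀h
  haveI : IsFiniteMeasure (volume.restrict (simplexSet L k)) := by
    constructor
    rw [Measure.restrict_apply_univ]
    exact volume_simplexSet_lt_top L k
  set ε : ℝ := (l₀ - 1/2)/2 with hε
  have hε0 : 0 < ε := by rw [hε]; linarith
  have hball : ∀ x ∈ Metric.ball l₀ ε, 1/2 ≤ x := by
    intro x hx
    rw [Metric.mem_ball, Real.dist_eq, abs_lt] at hx
    rw [hε] at hx
    linarith [hx.1]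
  have hballpos : ∀ x ∈ Metric.ball l₀ ε, (0:ℝ) < x := fun x hx =>
    lt_of_lt_of_le (by norm_num) (hball x hx)
  set Bnd : ℝ := M^k * ((2*(8*(1+L)^3))^(k+1) * (((k:ℝ)+1) + 1)^(m+1) *
      2 ^ ((((k:ℝ)+1) + ((m:ℝ)+1))/2)) with hBnd
  have key := hasDerivAt_integral_of_dominated_loc_of_deriv_le (𝕜 := ℝ)
    (μ := volume.restrict (simplexSet L k))
    (F := fun x t => iteratedDeriv m (Fp L W k t) x)
    (F' := fun x t => iteratedDeriv (m+1) (Fp L W k t) x)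
    (x₀ := l₀) (bound := fun _ => Bnd) (s := Metric.ball l₀ ε) (Metric.ball_mem_nhds l₀ hε0)
    ?hmeas ?hint ?hmeas' ?hbound ?hboundint ?hdiff
  · exact key.2
  case hmeas =>
    refine Filter.eventually_of_mem (isOpen_Ioi.mem_nhds hl₀0) fun x hx => ?_
    exact aesm_Fp hL hW k m x hx
  case hint =>
    apply Integrable.mono' (integrable_const
      (M^k * ((2*(8*(1+L)^3))^(k+1) * (((k:ℝ)+1) + 1)^m * l₀ ^ (-(((k:ℝ)+1) + m)/2))))
      (aesm_Fp hL hW k m l₀ hl₀0)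
    rw [ae_restrict_iff' (simplexSet_measurableSet L k)]
    refine Filter.Eventually.of_forall fun t ht => ?_
    rw [Real.norm_eq_abs]
    exact Fp_iFDW_bound hL hM (le_trans hm (by norm_num)) ht (le_of_lt hl₀h)
  case hmeas' =>
    exact aesm_Fp hL hW k (m+1) l₀ hl₀0
  case hbound =>
    rw [ae_restrict_iff' (simplexSet_measurableSet L k)]
    refine Filter.Eventually.of_forall fun t ht x hx => ?_
    rw [Real.norm_eq_abs]
    have h1 := Fp_iFDW_bound hL hM (show m+1 ≤ 3 by omega) ht (hball x hx)
    refine h1.trans ?_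
    rw [hBnd]
    have h2 : x ^ (-(((k:ℝ)+1) + ((m+1:ℕ):ℝ))/2) ≤ 2 ^ ((((k:ℝ)+1) + ((m:ℝ)+1))/2) := by
      have he : (-(((k:ℝ)+1) + ((m+1:ℕ):ℝ))/2) = -(((((k:ℝ)+1) + ((m:ℝ)+1))/2)) := by
        push_cast; ring
      rw [he]
      exact rpow_neg_le_two_rpow (hball x hx) (by positivity)
    apply mul_le_mul_of_nonneg_left _ (by positivity)
    apply mul_le_mul_of_nonneg_left _ (by positivity)
    exact h2
  case hboundint => exact integrable_const _
  case hdiff =>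
    refine Filter.Eventually.of_forall fun t x hx => ?_
    exact hasDerivAt_iteratedDeriv' isOpen_Ioi (contDiffOn_Fp L W k t) m (hballpos x hx)
set_option maxHeartbeats 1000000 in
/-- `s` is three times differentiable on `(1,∞)`, with
`s''(λ) = −L² sin(√λ L)/(4λ^{3/2}) + O(λ^{−2})` and
`s'''(λ) = −L³ cos(√λ L)/(8λ²) + O(λ^{−5/2})`. -/
theorem sfun_higher_deriv_asymptotics (L : ℝ) (hL : 0 < L) (W : ℝ → ℝ)
    (hW : ContinuousOn W (Icc 0 L)) (M : ℝ) (hM : ∀ x ∈ Icc (0:ℝ) L, |W x| ≤ M) :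
    (∀ lam : ℝ, 1 < lam →
      DifferentiableAt ℝ (sfun L W) lam ∧
      DifferentiableAt ℝ (deriv (sfun L W)) lam ∧
      DifferentiableAt ℝ (deriv (deriv (sfun L W))) lam) ∧
    ∃ C : ℝ, 0 < C ∧ ∀ lam : ℝ, 1 ≤ lam →
      |deriv (deriv (sfun L W)) lam + L^2 * Real.sin (Real.sqrt lam * L) / (4 * lam ^ ((3:ℝ)/2))|
        ≤ C * lam ^ (-(2:ℝ)) ∧
      |deriv (deriv (deriv (sfun L W))) lam + L^3 * Real.cos (Real.sqrt lam * L) / (8 * lam^2)|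
        ≤ C * lam ^ (-(5:ℝ)/2) := by
  have hM0 : 0 ≤ M := le_trans (abs_nonneg _) (hM 0 ⟨le_refl 0, hL.le⟩)
  set D : ℝ := 2*(8*(1+L)^3) with hD
  have hD1 : (1:ℝ) ≤ D := by
    have h1 : (1:ℝ) ≤ (1+L)^3 := one_le_pow₀ (by linarith)
    rw [hD]; nlinarith
  have hD0 : (0:ℝ) < D := lt_of_lt_of_le one_pos hD1
  set v : ℕ → ℝ := fun k => (L^(k+1) / (Nat.factorial (k+1))) *
      (M^(k+1) * (D^(k+2) * ((k:ℝ)+3)^3)) with hv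
  have hv0 : ∀ k, 0 ≤ v k := by
    intro k
    apply mul_nonneg (div_nonneg (pow_nonneg hL.le _) (Nat.cast_nonneg _))
    exact mul_nonneg (pow_nonneg hM0 _) (by positivity)
  -- bound for l ≥ 1
  have hTb : ∀ m : ℕ, m ≤ 3 → ∀ k : ℕ, ∀ l : ℝ, 1 ≤ l →
      |Tfun L W m (k+1) l| ≤ v k * l ^ (-((m:ℝ)+2)/2) := by
    intro m hm k l hl
    have hl2 : (1/2:ℝ) ≤ l := by linarith
    have hl0 : (0:ℝ) < l := by linarith
    have h := Tfun_bound hL hM hm (k+1) hl2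
    push_cast at h
    have hk3 : ((k:ℝ)+1+1+1) = (k:ℝ)+3 := by ring
    rw [hk3] at h
    refine h.trans ?_
    have hpow : ((k:ℝ)+3)^m ≤ ((k:ℝ)+3)^3 :=
      pow_le_pow_right₀ (by linarith [Nat.cast_nonneg (α := ℝ) k]) hm
    have hexp : l ^ (-((k:ℝ)+1+1+(m:ℝ))/2) ≤ l ^ (-((m:ℝ)+2)/2) := by
      apply Real.rpow_le_rpow_of_exponent_le hl
      have : (0:ℝ) ≤ (k:ℝ) := Nat.cast_nonneg k
      linarith
    calc (L^(k+1) / ((Nat.factorial (k+1) : ℝ))) *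
          (M^(k+1) * (D^(k+1+1) * ((k:ℝ)+3)^m * l ^ (-((k:ℝ)+1+1+(m:ℝ))/2)))
        = (L^(k+1) / ((Nat.factorial (k+1) : ℝ))) * M^(k+1) * D^(k+2) *
            (((k:ℝ)+3)^m * l ^ (-((k:ℝ)+1+1+(m:ℝ))/2)) := by ring_nf
      _ ≤ (L^(k+1) / ((Nat.factorial (k+1) : ℝ))) * M^(k+1) * D^(k+2) *
            (((k:ℝ)+3)^3 * l ^ (-((m:ℝ)+2)/2)) := by
          apply mul_le_mul_of_nonneg_left _ (by
            apply mul_nonneg (mul_nonneg (div_nonneg (pow_nonneg hL.le _)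
              (Nat.cast_nonneg _)) (pow_nonneg hM0 _)) (pow_nonneg hD0.le _))
          exact mul_le_mul hpow hexp (Real.rpow_nonneg hl0.le _) (by positivity)
      _ = v k * l ^ (-((m:ℝ)+2)/2) := by rw [hv]; ring
  -- uniform bound for l ≥ 1/2
  set u : ℕ → ℝ := fun k => v k * 2^(k+3) with hu
  have hv_le_u : ∀ k, v k ≤ u k := by
    intro k
    rw [hu]
    exact le_mul_of_one_le_right (hv0 k) (one_le_pow₀ (by norm_num))
  have hu0 : ∀ k, 0 ≤ u k := fun k => le_trans (hv0 k) (hv_le_u k)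
  have hub : ∀ m : ℕ, m ≤ 3 → ∀ k : ℕ, ∀ l : ℝ, 1/2 ≤ l →
      |Tfun L W m (k+1) l| ≤ u k := by
    intro m hm k l hl
    have hl0 : (0:ℝ) < l := lt_of_lt_of_le (by norm_num) hl
    have h := Tfun_bound hL hM hm (k+1) hl
    push_cast at h
    have hk3 : ((k:ℝ)+1+1+1) = (k:ℝ)+3 := by ring
    rw [hk3] at h
    refine h.trans ?_
    have hpow : ((k:ℝ)+3)^m ≤ ((k:ℝ)+3)^3 :=
      pow_le_pow_right₀ (by linarith [Nat.cast_nonneg (α := ℝ) k]) hm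
    have hexp : l ^ (-((k:ℝ)+1+1+(m:ℝ))/2) ≤ 2^(k+3) := by
      have h1 : l ^ (-((k:ℝ)+1+1+(m:ℝ))/2) ≤ (2:ℝ) ^ (((k:ℝ)+1+1+(m:ℝ))/2) := by
        have he : -((k:ℝ)+1+1+(m:ℝ))/2 = -(((k:ℝ)+1+1+(m:ℝ))/2) := by ring
        rw [he]
        apply rpow_neg_le_two_rpow hl
        have h2 : (0:ℝ) ≤ (k:ℝ) := Nat.cast_nonneg k
        have h3 : (0:ℝ) ≤ (m:ℝ) := Nat.cast_nonneg m
        positivity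
      have h2 : (2:ℝ) ^ (((k:ℝ)+1+1+(m:ℝ))/2) ≤ (2:ℝ) ^ (((k+3:ℕ):ℝ)) := by
        apply Real.rpow_le_rpow_of_exponent_le one_le_two
        push_cast
        have h3 : (m:ℝ) ≤ 3 := by exact_mod_cast hm
        linarith [Nat.cast_nonneg (α := ℝ) k]
      have h3 : (2:ℝ) ^ (((k+3:ℕ):ℝ)) = 2^(k+3) := Real.rpow_natCast 2 (k+3)
      linarith
    calc (L^(k+1) / ((Nat.factorial (k+1) : ℝ))) *
          (M^(k+1) * (D^(k+1+1) * ((k:ℝ)+3)^m * l ^ (-((k:ℝ)+1+1+(m:ℝ))/2)))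
        = (L^(k+1) / ((Nat.factorial (k+1) : ℝ))) * M^(k+1) * D^(k+2) *
            (((k:ℝ)+3)^m * l ^ (-((k:ℝ)+1+1+(m:ℝ))/2)) := by ring_nf
      _ ≤ (L^(k+1) / ((Nat.factorial (k+1) : ℝ))) * M^(k+1) * D^(k+2) *
            (((k:ℝ)+3)^3 * 2^(k+3)) := by
          apply mul_le_mul_of_nonneg_left _ (by
            apply mul_nonneg (mul_nonneg (div_nonneg (pow_nonneg hL.le _)
              (Nat.cast_nonneg _)) (pow_nonneg hM0 _)) (pow_nonneg hD0.le _))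
          exact mul_le_mul hpow hexp (Real.rpow_nonneg hl0.le _) (by positivity)
      _ = u k := by rw [hu, hv]; ring
  -- summability
  set R : ℝ := 16*L*M*D with hR
  set Q : ℝ := L*M*D^2*4096 with hQ
  have husum : Summable u := by
    have hle : ∀ k, u k ≤ Q * R^k / (Nat.factorial k) := by
      intro k
      have hfac : (Nat.factorial k : ℝ) ≤ (Nat.factorial (k+1) : ℝ) := by
        exact_mod_cast Nat.factorial_le (Nat.le_succ k)
      have hfac0 : (0:ℝ) < (Nat.factorial k : ℝ) := by
        exact_mod_cast Nat.factorial_pos k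
      have h1 : L^(k+1) / ((Nat.factorial (k+1)) : ℝ) ≤ L^(k+1) / ((Nat.factorial k) : ℝ) :=
        div_le_div_of_nonneg_left (pow_nonneg hL.le _) hfac0 hfac
      have hk8 : ((k:ℝ)+3) ≤ 8 * 2^k := by
        have h2 : (k+3 : ℕ) ≤ 2^(k+3) := le_of_lt (Nat.lt_two_pow_self (n := k+3))
        have h3 : ((k+3:ℕ):ℝ) ≤ ((2^(k+3) : ℕ):ℝ) := by exact_mod_cast h2
        push_cast at h3
        calc ((k:ℝ)+3) ≤ (2:ℝ)^(k+3) := h3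
          _ = 8 * 2^k := by rw [pow_add]; norm_num; ring
      have hk3 : ((k:ℝ)+3)^3 ≤ 512 * 8^k := by
        have h4 : ((k:ℝ)+3)^3 ≤ (8 * 2^k)^3 := by
          apply pow_le_pow_left₀ (by linarith [Nat.cast_nonneg (α := ℝ) k]) hk8
        refine h4.trans (le_of_eq ?_)
        rw [mul_pow, ← pow_mul, show k*3 = 3*k by ring, pow_mul]
        norm_num
      calc u k = (L^(k+1) / ((Nat.factorial (k+1)) : ℝ)) *
            (M^(k+1) * (D^(k+2) * ((k:ℝ)+3)^3)) * 2^(k+3) := by rw [hu, hv]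
        _ ≤ (L^(k+1) / ((Nat.factorial k) : ℝ)) *
            (M^(k+1) * (D^(k+2) * (512 * 8^k))) * 2^(k+3) := by
            apply mul_le_mul_of_nonneg_right _ (by positivity)
            apply mul_le_mul h1 _ _ (div_nonneg (pow_nonneg hL.le _) hfac0.le)
            · apply mul_le_mul_of_nonneg_left _ (pow_nonneg hM0 _)
              exact mul_le_mul_of_nonneg_left hk3 (pow_nonneg hD0.le _)
            · apply mul_nonneg (pow_nonneg hM0 _)
              positivity
        _ = Q * R^k / (Nat.factorial k) := by
            rw [hQ, hR,
              show ((16:ℝ)*L*M*D)^k = 8^k * 2^k * L^k * M^k * D^k by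
                rw [show (16:ℝ)*L*M*D = ((8*2)*L)*M*D by norm_num]
                rw [mul_pow, mul_pow, mul_pow, mul_pow]]
            field_simp
            ring
    apply Summable.of_nonneg_of_le hu0 hle
    have := (Real.summable_pow_div_factorial R).mul_left Q
    simpa [mul_div_assoc] using this
  have hvsum : Summable v := Summable.of_nonneg_of_le hv0 hv_le_u husum
  set V : ℝ := ∑' k, v k with hV
  have hV0 : 0 ≤ V := tsum_nonneg hv0
  -- summability of the T-series at each point
  have hTsummable : ∀ m : ℕ, m ≤ 3 → ∀ l : ℝ, 1/2 ≤ l →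
      Summable (fun k => Tfun L W m (k+1) l) := by
    intro m hm l hl
    apply Summable.of_norm_bounded husum
    intro k
    rw [Real.norm_eq_abs]
    exact hub m hm k l hl
  -- derivative of the series
  have hSeries : ∀ m : ℕ, m ≤ 2 → ∀ l ∈ Ioi (1/2:ℝ),
      HasDerivAt (fun y => ∑' k, Tfun L W m (k+1) y) (∑' k, Tfun L W (m+1) (k+1) l) l := by
    intro m hm l hl
    apply hasDerivAt_tsum_of_isPreconnected husum isOpen_Ioi isPreconnected_Ioi
      (g := fun k y => Tfun L W m (k+1) y) (g' := fun k y => Tfun L W (m+1) (k+1) y)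
      (y₀ := 1) (fun k y hy => hasDerivAt_Tfun hL hW hM hm (k+1) hy)
      (fun k y hy => by
        rw [Real.norm_eq_abs]
        exact hub (m+1) (by omega) k y (le_of_lt hy))
      (by norm_num : (1:ℝ) ∈ Ioi (1/2:ℝ))
      (hTsummable m (by omega) 1 (by norm_num)) hl
  set G : ℕ → ℝ → ℝ := fun m l => gd m L l + ∑' k, Tfun L W m (k+1) l with hG
  have hGd : ∀ m : ℕ, m ≤ 2 → ∀ l ∈ Ioi (1/2:ℝ), HasDerivAt (G m) (G (m+1) l) l := by
    intro m hm l hl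
    have h0 : (0:ℝ) < l := lt_trans (by norm_num) hl
    have hgd : HasDerivAt (gd m L) (gd (m+1) L l) l := by
      interval_cases m
      · exact hasDerivAt_gd0 L h0
      · exact hasDerivAt_gd1 L h0
      · exact hasDerivAt_gd2 L h0
    exact hgd.add (hSeries m hm l hl)
  -- sfun equals G 0 on Ioi (1/2)
  have hsfeq : Set.EqOn (sfun L W) (G 0) (Ioi (1/2:ℝ)) := by
    intro l hl
    have h0 : (0:ℝ) < l := lt_trans (by norm_num) hl
    rw [sfun, hG]
    congr 1
    · show Real.sin (Real.sqrt l * L) / Real.sqrt l = gd 0 L l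
      show _ = Real.sin (Real.sqrt l * L) * l ^ (-(1:ℝ)/2)
      rw [div_eq_mul_inv]
      congr 1
      rw [show -(1:ℝ)/2 = -((1:ℝ)/2) by norm_num, Real.rpow_neg h0.le, ← Real.sqrt_eq_rpow]
    · exact tsum_congr fun k => Sfun_eq_Tfun L W (k+1) h0
  have hd1 : Set.EqOn (deriv (sfun L W)) (G 1) (Ioi (1/2:ℝ)) := by
    intro l hl
    rw [Filter.EventuallyEq.deriv_eq
      (Filter.eventuallyEq_of_mem (isOpen_Ioi.mem_nhds hl) hsfeq)]
    exact (hGd 0 (by norm_num) l hl).deriv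
  have hd2 : Set.EqOn (deriv (deriv (sfun L W))) (G 2) (Ioi (1/2:ℝ)) := by
    intro l hl
    rw [Filter.EventuallyEq.deriv_eq
      (Filter.eventuallyEq_of_mem (isOpen_Ioi.mem_nhds hl) hd1)]
    exact (hGd 1 (by norm_num) l hl).deriv
  have hd3 : Set.EqOn (deriv (deriv (deriv (sfun L W)))) (G 3) (Ioi (1/2:ℝ)) := by
    intro l hl
    rw [Filter.EventuallyEq.deriv_eq
      (Filter.eventuallyEq_of_mem (isOpen_Ioi.mem_nhds hl) hd2)]
    exact (hGd 2 (by norm_num) l hl).deriv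
  -- tail bound
  have tailbound : ∀ m : ℕ, m ≤ 3 → ∀ lam : ℝ, 1 ≤ lam →
      |∑' k, Tfun L W m (k+1) lam| ≤ V * lam ^ (-((m:ℝ)+2)/2) := by
    intro m hm lam hlam
    have hl2 : (1/2:ℝ) ≤ lam := by linarith
    have hb : ∀ k, |Tfun L W m (k+1) lam| ≤ v k * lam ^ (-((m:ℝ)+2)/2) :=
      fun k => hTb m hm k lam hlam
    have hs : Summable (fun k => v k * lam ^ (-((m:ℝ)+2)/2)) := hvsum.mul_right _
    have hsn : Summable (fun k => |Tfun L W m (k+1) lam|) :=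
      Summable.of_nonneg_of_le (fun k => abs_nonneg _) hb hs
    calc |∑' k, Tfun L W m (k+1) lam| ≤ ∑' k, |Tfun L W m (k+1) lam| := by
          have := norm_tsum_le_tsum_norm (f := fun k => Tfun L W m (k+1) lam)
            (by simpa [Real.norm_eq_abs] using hsn)
          simpa [Real.norm_eq_abs] using this
      _ ≤ ∑' k, v k * lam ^ (-((m:ℝ)+2)/2) := Summable.tsum_le_tsum hb hsn hs
      _ = V * lam ^ (-((m:ℝ)+2)/2) := by rw [tsum_mul_right]
  constructor
  · -- differentiability
    intro lam hlam
    have hmem : lam ∈ Ioi (1/2:ℝ) := by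
      simp only [mem_Ioi]; linarith
    refine ⟨?_, ?_, ?_⟩
    · exact (Filter.eventuallyEq_of_mem (isOpen_Ioi.mem_nhds hmem)
        hsfeq).differentiableAt_iff.mpr (hGd 0 (by norm_num) lam hmem).differentiableAt
    · exact (Filter.eventuallyEq_of_mem (isOpen_Ioi.mem_nhds hmem)
        hd1).differentiableAt_iff.mpr (hGd 1 (by norm_num) lam hmem).differentiableAt
    · exact (Filter.eventuallyEq_of_mem (isOpen_Ioi.mem_nhds hmem)
        hd2).differentiableAt_iff.mpr (hGd 2 (by norm_num) lam hmem).differentiableAt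
  · -- asymptotics
    refine ⟨3*L/4 + 3/4 + 3*L^2/4 + 15*L/8 + 15/8 + V + 1, by nlinarith, ?_⟩
    intro lam hlam
    have hmem : lam ∈ Ioi (1/2:ℝ) := by simp only [mem_Ioi]; linarith
    have h0lam : (0:ℝ) < lam := by linarith
    have habs : ∀ x : ℝ, |Real.sin x| ≤ 1 := fun x => Real.abs_sin_le_one x
    have habc : ∀ x : ℝ, |Real.cos x| ≤ 1 := fun x => Real.abs_cos_le_one x
    constructor
    · -- second derivative
      rw [hd2 hmem]
      have key1 : gd 2 L lam + L^2 * Real.sin (Real.sqrt lam * L) / (4 * lam ^ ((3:ℝ)/2))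
          = -(3*L/4) * (Real.cos (Real.sqrt lam * L) * lam ^ (-(2:ℝ)))
            + 3/4 * (Real.sin (Real.sqrt lam * L) * lam ^ (-(5:ℝ)/2)) := by
        have hx : lam ^ (-(3:ℝ)/2) = (lam ^ ((3:ℝ)/2))⁻¹ := by
          rw [show -(3:ℝ)/2 = -((3:ℝ)/2) by norm_num, Real.rpow_neg h0lam.le]
        have hx0 : (0:ℝ) < lam ^ ((3:ℝ)/2) := Real.rpow_pos_of_pos h0lam _
        show -(L^2/4) * (Real.sin (Real.sqrt lam * L) * lam ^ (-(3:ℝ)/2))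
          - 3*L/4 * (Real.cos (Real.sqrt lam * L) * lam ^ (-(2:ℝ)))
          + 3/4 * (Real.sin (Real.sqrt lam * L) * lam ^ (-(5:ℝ)/2))
          + L^2 * Real.sin (Real.sqrt lam * L) / (4 * lam ^ ((3:ℝ)/2)) = _
        rw [hx]
        ring
      have hsplit : G 2 lam + L^2 * Real.sin (Real.sqrt lam * L) / (4 * lam ^ ((3:ℝ)/2))
          = (gd 2 L lam + L^2 * Real.sin (Real.sqrt lam * L) / (4 * lam ^ ((3:ℝ)/2)))
            + ∑' k, Tfun L W 2 (k+1) lam := by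
        rw [hG]; ring
      rw [hsplit, key1]
      have ht1 := tb (-(3*L/4)) (habc (Real.sqrt lam * L)) h0lam (-(2:ℝ))
      have ht2 := tb ((3:ℝ)/4) (habs (Real.sqrt lam * L)) h0lam (-(5:ℝ)/2)
      have h52 : lam ^ (-(5:ℝ)/2) ≤ lam ^ (-(2:ℝ)) :=
        Real.rpow_le_rpow_of_exponent_le hlam (by norm_num)
      have htail := tailbound 2 (by norm_num) lam hlam
      have hexp2 : -(((2:ℕ):ℝ)+2)/2 = -(2:ℝ) := by norm_num
      rw [hexp2] at htail
      have habs1 : |-(3*L/4)| = 3*L/4 := by rw [abs_neg, abs_of_nonneg (by linarith)]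
      have habs2 : |(3:ℝ)/4| = 3/4 := by norm_num
      rw [habs1] at ht1
      rw [habs2] at ht2
      have hr2 : (0:ℝ) ≤ lam ^ (-(2:ℝ)) := Real.rpow_nonneg h0lam.le _
      calc |(-(3*L/4) * (Real.cos (Real.sqrt lam * L) * lam ^ (-(2:ℝ)))
            + 3/4 * (Real.sin (Real.sqrt lam * L) * lam ^ (-(5:ℝ)/2)))
            + ∑' k, Tfun L W 2 (k+1) lam|
          ≤ |(-(3*L/4) * (Real.cos (Real.sqrt lam * L) * lam ^ (-(2:ℝ)))
            + 3/4 * (Real.sin (Real.sqrt lam * L) * lam ^ (-(5:ℝ)/2)))|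
            + |∑' k, Tfun L W 2 (k+1) lam| := abs_add_le _ _
        _ ≤ (3*L/4 * lam ^ (-(2:ℝ)) + 3/4 * lam ^ (-(5:ℝ)/2)) + V * lam ^ (-(2:ℝ)) :=
            add_le_add ((abs_add_le _ _).trans (add_le_add ht1 ht2)) htail
        _ ≤ (3*L/4 + 3/4 + 3*L^2/4 + 15*L/8 + 15/8 + V + 1) * lam ^ (-(2:ℝ)) := by
            have e1 : 3/4 * lam ^ (-(5:ℝ)/2) ≤ 3/4 * lam ^ (-(2:ℝ)) :=
              mul_le_mul_of_nonneg_left h52 (by norm_num)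
            have hsq : (0:ℝ) ≤ 3*L^2/4 := by positivity
            have e3 : (3*L/4 + 3/4 + V) * lam ^ (-(2:ℝ))
                ≤ (3*L/4 + 3/4 + 3*L^2/4 + 15*L/8 + 15/8 + V + 1) * lam ^ (-(2:ℝ)) :=
              mul_le_mul_of_nonneg_right (by linarith) hr2
            nlinarith [e1, e3]
    · -- third derivative
      rw [hd3 hmem]
      have key2 : gd 3 L lam + L^3 * Real.cos (Real.sqrt lam * L) / (8 * lam^2)
          = 3*L^2/4 * (Real.sin (Real.sqrt lam * L) * lam ^ (-(5:ℝ)/2))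
            + 15*L/8 * (Real.cos (Real.sqrt lam * L) * lam ^ (-(3:ℝ)))
            - 15/8 * (Real.sin (Real.sqrt lam * L) * lam ^ (-(7:ℝ)/2)) := by
        have hx : lam ^ (-(2:ℝ)) = (lam^2)⁻¹ := by
          rw [show -(2:ℝ) = -(((2:ℕ)):ℝ) by norm_num, Real.rpow_neg h0lam.le,
            Real.rpow_natCast]
        have hx0 : (0:ℝ) < lam^2 := by positivity
        show -(L^3/8) * (Real.cos (Real.sqrt lam * L) * lam ^ (-(2:ℝ)))
          + 3*L^2/4 * (Real.sin (Real.sqrt lam * L) * lam ^ (-(5:ℝ)/2))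
          + 15*L/8 * (Real.cos (Real.sqrt lam * L) * lam ^ (-(3:ℝ)))
          - 15/8 * (Real.sin (Real.sqrt lam * L) * lam ^ (-(7:ℝ)/2))
          + L^3 * Real.cos (Real.sqrt lam * L) / (8 * lam^2) = _
        rw [hx]
        ring
      have hsplit : G 3 lam + L^3 * Real.cos (Real.sqrt lam * L) / (8 * lam^2)
          = (gd 3 L lam + L^3 * Real.cos (Real.sqrt lam * L) / (8 * lam^2))
            + ∑' k, Tfun L W 3 (k+1) lam := by
        rw [hG]; ring
      rw [hsplit, key2]
      have ht1 := tb (3*L^2/4) (habs (Real.sqrt lam * L)) h0lam (-(5:ℝ)/2)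
      have ht2 := tb (15*L/8) (habc (Real.sqrt lam * L)) h0lam (-(3:ℝ))
      have ht3 := tb ((15:ℝ)/8) (habs (Real.sqrt lam * L)) h0lam (-(7:ℝ)/2)
      have h3le : lam ^ (-(3:ℝ)) ≤ lam ^ (-(5:ℝ)/2) :=
        Real.rpow_le_rpow_of_exponent_le hlam (by norm_num)
      have h7le : lam ^ (-(7:ℝ)/2) ≤ lam ^ (-(5:ℝ)/2) :=
        Real.rpow_le_rpow_of_exponent_le hlam (by norm_num)
      have htail := tailbound 3 (by norm_num) lam hlam
      have hexp3 : -(((3:ℕ):ℝ)+2)/2 = -(5:ℝ)/2 := by norm_num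
      rw [hexp3] at htail
      have habs1 : |3*L^2/4| = 3*L^2/4 := by rw [abs_of_nonneg (by positivity)]
      have habs2 : |15*L/8| = 15*L/8 := by rw [abs_of_nonneg (by positivity)]
      have habs3 : |(15:ℝ)/8| = 15/8 := by norm_num
      rw [habs1] at ht1
      rw [habs2] at ht2
      rw [habs3] at ht3
      have hr5 : (0:ℝ) ≤ lam ^ (-(5:ℝ)/2) := Real.rpow_nonneg h0lam.le _
      calc |(3*L^2/4 * (Real.sin (Real.sqrt lam * L) * lam ^ (-(5:ℝ)/2))
            + 15*L/8 * (Real.cos (Real.sqrt lam * L) * lam ^ (-(3:ℝ)))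
            - 15/8 * (Real.sin (Real.sqrt lam * L) * lam ^ (-(7:ℝ)/2)))
            + ∑' k, Tfun L W 3 (k+1) lam|
          ≤ |3*L^2/4 * (Real.sin (Real.sqrt lam * L) * lam ^ (-(5:ℝ)/2))
            + 15*L/8 * (Real.cos (Real.sqrt lam * L) * lam ^ (-(3:ℝ)))
            - 15/8 * (Real.sin (Real.sqrt lam * L) * lam ^ (-(7:ℝ)/2))|
            + |∑' k, Tfun L W 3 (k+1) lam| := abs_add_le _ _
        _ ≤ (3*L^2/4 * lam ^ (-(5:ℝ)/2) + 15*L/8 * lam ^ (-(3:ℝ))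
              + 15/8 * lam ^ (-(7:ℝ)/2)) + V * lam ^ (-(5:ℝ)/2) := by
            apply add_le_add _ htail
            exact (abs_sub _ _).trans (add_le_add ((abs_add_le _ _).trans
              (add_le_add ht1 ht2)) ht3)
        _ ≤ (3*L/4 + 3/4 + 3*L^2/4 + 15*L/8 + 15/8 + V + 1) * lam ^ (-(5:ℝ)/2) := by
            have e1 : 15*L/8 * lam ^ (-(3:ℝ)) ≤ 15*L/8 * lam ^ (-(5:ℝ)/2) :=
              mul_le_mul_of_nonneg_left h3le (by positivity)
            have e2 : 15/8 * lam ^ (-(7:ℝ)/2) ≤ 15/8 * lam ^ (-(5:ℝ)/2) :=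
              mul_le_mul_of_nonneg_left h7le (by norm_num)
            have e3 : (3*L^2/4 + 15*L/8 + 15/8 + V) * lam ^ (-(5:ℝ)/2)
                ≤ (3*L/4 + 3/4 + 3*L^2/4 + 15*L/8 + 15/8 + V + 1) * lam ^ (-(5:ℝ)/2) :=
              mul_le_mul_of_nonneg_right (by linarith) hr5
            nlinarith [e1, e2, e3]
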